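/- The Zeeman Z topology on Minkowski space ℝ⁴ is coarser than Zeeman's Fine topology F: every Z-open set is F-open. -/
import Mathlib


open Topology Set

/-- Minkowski space: `ℝ⁴` with the Euclidean metric structure. -/
abbrev M : Type := EuclideanSpace ℝ (Fin 4)

/-- The characteristic quadratic form `Q(x) = x₀² − x₁² − x₂² − x₃²`. -/
noncomputable def Q (x : M) : ℝ := x 0 ^ 2 - x 1 ^ 2 - x 2 ^ 2 - x 3 ^ 2

/-- The Euclidean topology `E` on `M`. -/
noncomputable def E : TopologicalSpace M := inferInstance

/-- The light cone of `x`. -/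
def lightCone (x : M) : Set M := {y | Q (y - x) = 0}

/-- The time cone of `x`. -/
def timeCone (x : M) : Set M := {x} ∪ {y | Q (y - x) > 0}

/-- The space cone of `x`. -/
def spaceCone (x : M) : Set M := {x} ∪ {y | Q (y - x) < 0}

/-- The basic open sets `Z_ε(x) = B_ε^E(x) ∩ (C^T(x) ∪ C^S(x))` of the Zeeman `Z` topology. -/
def Zset (x : M) (ε : ℝ) : Set M := Metric.ball x ε ∩ (timeCone x ∪ spaceCone x)

/-- The Zeeman `Z` topology, generated by the base of the sets `Z_ε(x)`. -/
def ZeemanZ : TopologicalSpace M :=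
  TopologicalSpace.generateFrom {s | ∃ x : M, ∃ ε : ℝ, 0 < ε ∧ s = Zset x ε}

/-- The irreflexive horismos relation `x → y`. -/
def horismos (x y : M) : Prop := y ≠ x ∧ Q (y - x) = 0 ∧ (y - x) 0 > 0

/-- The future null cone `N⁺(x)`. -/
def Nplus (x : M) : Set M := {y | horismos x y}

/-- The past null cone `N⁻(x)`. -/
def Nminus (x : M) : Set M := {y | horismos y x}

/-- The interval topology `T_in^→` induced by the irreflexive horismos relation,
generated by the subbase of complements of future and past null cones. -/
def Tin : TopologicalSpace M :=
  TopologicalSpace.generateFrom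
    ({s | ∃ x : M, s = univ \ Nplus x} ∪ {s | ∃ x : M, s = univ \ Nminus x})

/-- A time axis: an affine line with timelike direction. -/
def IsTimeAxis (L : Set M) : Prop :=
  ∃ a v : M, Q v > 0 ∧ L = {p | ∃ t : ℝ, p = a + t • v}

/-- A space axis: an affine 3-flat whose direction is a 3-dimensional subspace
on which `Q` is negative definite. -/
def IsSpaceAxis (L : Set M) : Prop :=
  ∃ a : M, ∃ W : Submodule ℝ M, Module.finrank ℝ W = 3 ∧
    (∀ w ∈ W, w ≠ 0 → Q w < 0) ∧ L = {p | ∃ w ∈ W, p = a + w}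

/-- A topology `t` on `M` induces the Euclidean subspace topology on every time axis
and on every space axis. -/
def InducesEuclideanOnAxes (t : TopologicalSpace M) : Prop :=
  (∀ L : Set M, IsTimeAxis L →
    TopologicalSpace.induced (Subtype.val : L → M) t =
      TopologicalSpace.induced (Subtype.val : L → M) E) ∧
  (∀ L : Set M, IsSpaceAxis L →
    TopologicalSpace.induced (Subtype.val : L → M) t =
      TopologicalSpace.induced (Subtype.val : L → M) E)

/-- Zeeman's Fine topology `F`: the finest topology on `M` inducing the Euclidean topology
on every time and space axis.  (In Mathlib's lattice of topologies, `≤` means "finer",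
so the finest such topology is the infimum of the family.) -/
noncomputable def FineF : TopologicalSpace M :=
  sInf {t : TopologicalSpace M | InducesEuclideanOnAxes t}

/-- The chronological order `x ≪ y`. -/
def chron (x y : M) : Prop := Q (y - x) > 0 ∧ (y - x) 0 > 0

lemma Q_continuous : Continuous Q := by
  have h : ∀ i : Fin 4, Continuous fun x : M => x i := fun i =>
    (EuclideanSpace.proj (𝕜 := ℝ) i : M →L[ℝ] ℝ).continuous
  unfold Q
  exact ((((h 0).pow 2).sub ((h 1).pow 2)).sub ((h 2).pow 2)).sub ((h 3).pow 2)

lemma Q_smul (c : ℝ) (v : M) : Q (c • v) = c ^ 2 * Q v := by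
  simp only [Q, PiLp.smul_apply, smul_eq_mul]
  ring

lemma cones_eq (x : M) : timeCone x ∪ spaceCone x = {x} ∪ {y | Q (y - x) ≠ 0} := by
  ext y
  simp only [timeCone, spaceCone, mem_union, mem_singleton_iff, mem_setOf_eq]
  constructor
  · rintro ((h | h) | (h | h)) <;> simp [h, ne_of_gt, ne_of_lt]
  · rintro (h | h)
    · exact Or.inl (Or.inl h)
    · rcases h.lt_or_gt with h' | h'
      · exact Or.inr (Or.inr h')
      · exact Or.inl (Or.inr h')

lemma mem_Zset_self (x : M) {ε : ℝ} (hε : 0 < ε) : x ∈ Zset x ε :=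
  ⟨Metric.mem_ball_self hε, Or.inl (Or.inl rfl)⟩

lemma Z_le_E : ZeemanZ ≤ E := by
  rw [TopologicalSpace.le_def]
  intro U hU
  have hU' : IsOpen U := hU
  choose ε hε hball using fun x (hx : x ∈ U) => Metric.isOpen_iff.mp hU' x hx
  have hUeq : U = ⋃ x, ⋃ hx : x ∈ U, Zset x (ε x hx) := by
    apply Subset.antisymm
    · intro x hx
      exact mem_iUnion.mpr ⟨x, mem_iUnion.mpr ⟨hx, mem_Zset_self x (hε x hx)⟩⟩
    · intro y hy
      rcases mem_iUnion.mp hy with ⟨x, hy⟩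
      rcases mem_iUnion.mp hy with ⟨hx, hy⟩
      exact hball x hx hy.1
  rw [hUeq]
  letI : TopologicalSpace M := ZeemanZ
  exact isOpen_iUnion fun x => isOpen_iUnion fun hx =>
    TopologicalSpace.isOpen_generateFrom_of_mem ⟨x, ε x hx, hε x hx, rfl⟩

lemma induced_eq_of_axis (L : Set M)
    (hL : ∀ x ∈ L, ∀ y ∈ L, y ≠ x → Q (y - x) ≠ 0) :
    TopologicalSpace.induced (Subtype.val : L → M) ZeemanZ =
      TopologicalSpace.induced (Subtype.val : L → M) E := by
  refine le_antisymm (induced_mono Z_le_E) ?_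
  rw [ZeemanZ, induced_generateFrom_eq]
  refine le_generateFrom ?_
  rintro s ⟨u, ⟨x, ε, hε, rfl⟩, rfl⟩
  rw [isOpen_induced_iff]
  by_cases hx : x ∈ L
  · refine ⟨Metric.ball x ε, Metric.isOpen_ball, ?_⟩
    ext ⟨y, hy⟩
    simp only [mem_preimage, Zset, mem_inter_iff]
    refine ⟨fun h => ⟨h, ?_⟩, fun h => h.1⟩
    rw [cones_eq, mem_union, mem_singleton_iff, mem_setOf_eq]
    by_cases hyx : y = x
    · exact Or.inl hyx
    · exact Or.inr (hL x hx y hy hyx)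
  · refine ⟨Metric.ball x ε ∩ {y | Q (y - x) ≠ 0},
      Metric.isOpen_ball.inter ((isOpen_ne).preimage
        (Q_continuous.comp (continuous_id.sub continuous_const))), ?_⟩
    ext ⟨y, hy⟩
    simp only [mem_preimage, Zset, mem_inter_iff, mem_setOf_eq]
    rw [cones_eq]
    simp only [mem_union, mem_singleton_iff, mem_setOf_eq]
    constructor
    · rintro ⟨h1, h2⟩
      exact ⟨h1, Or.inr h2⟩
    · rintro ⟨h1, h2 | h2⟩
      · exact absurd (h2 ▸ hy) hx
      · exact ⟨h1, h2⟩


lemma timeAxis_prop (L : Set M) (hL : IsTimeAxis L) :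
    ∀ x ∈ L, ∀ y ∈ L, y ≠ x → Q (y - x) ≠ 0 := by
  rcases hL with ⟨a, v, hv, rfl⟩
  rintro x ⟨s, rfl⟩ y ⟨t, rfl⟩ hne
  have hts : t ≠ s := fun h => hne (by rw [h])
  have heq : (a + t • v) - (a + s • v) = (t - s) • v := by
    rw [sub_smul]; abel
  rw [heq, Q_smul]
  exact ne_of_gt (mul_pos (pow_two_pos_of_ne_zero (sub_ne_zero.mpr hts)) hv)

lemma spaceAxis_prop (L : Set M) (hL : IsSpaceAxis L) :
    ∀ x ∈ L, ∀ y ∈ L, y ≠ x → Q (y - x) ≠ 0 := by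
  rcases hL with ⟨a, W, _, hneg, rfl⟩
  rintro x ⟨w1, hw1, rfl⟩ y ⟨w2, hw2, rfl⟩ hne
  have heq : (a + w2) - (a + w1) = w2 - w1 := by abel
  rw [heq]
  refine ne_of_lt (hneg _ (W.sub_mem hw2 hw1) fun h => hne ?_)
  have : w2 = w1 := sub_eq_zero.mp h
  rw [this]

lemma zeemanZ_induces : InducesEuclideanOnAxes ZeemanZ :=
  ⟨fun L hL => induced_eq_of_axis L (timeAxis_prop L hL),
   fun L hL => induced_eq_of_axis L (spaceAxis_prop L hL)⟩

/-- The Zeeman `Z` topology is coarser than Zeeman's Fine topology `F`: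
every `Z`-open set is `F`-open. -/
theorem zeemanZ_coarser_than_fineF :
    ∀ s : Set M, IsOpen[ZeemanZ] s → IsOpen[FineF] s := by
  intro s hs
  have hm : ZeemanZ ∈ {t : TopologicalSpace M | InducesEuclideanOnAxes t} := zeemanZ_induces
  have h : FineF ≤ ZeemanZ := sInf_le hm
  exact TopologicalSpace.le_def.mp h s hs
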